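/- Let h : {1,…,v}ⁿ → {-1,1} be an n-dimensional Hadamard matrix of order v (indices taken in ℤ/vℤ). Define the (n+1)-dimensional matrix H of order v by H(i₁,…,iₙ,i_{n+1}) = h(i₁,…,i_{n-1}, i_n + i_{n+1}), where the sum i_n + i_{n+1} is taken modulo v. Then H is an (n+1)-dimensional Hadamard matrix of order v. -/
import Mathlib


open Finset

/-- An `n`-dimensional matrix of order `v` over `{-1,1}` (indices in `ℤ/vℤ`) is an
`n`-dimensional Hadamard matrix if for every coordinate position `j` and all values
`a b`, the sum over the remaining `n-1` coordinates of `H(…,a,…)·H(…,b,…)` equals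
`v^(n-1)·δ_{ab}`. -/
def IsHadamardND (v n : ℕ) [NeZero v] (H : (Fin n → ZMod v) → ℤ) : Prop :=
  (∀ i, H i = 1 ∨ H i = -1) ∧
  ∀ j : Fin n, ∀ a b : ZMod v,
    ∑ g : {k : Fin n // k ≠ j} → ZMod v,
      H (fun k => if hk : k = j then a else g ⟨k, hk⟩) *
      H (fun k => if hk : k = j then b else g ⟨k, hk⟩)
    = if a = b then (v : ℤ) ^ (n - 1) else 0

section Aux

variable {v : ℕ} [NeZero v]

lemma sum_update_eq (n : ℕ) (j : Fin n) (F : (Fin n → ZMod v) → ℤ) (a b : ZMod v) :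
    ∑ i : Fin n → ZMod v, F (Function.update i j a) * F (Function.update i j b)
    = v * ∑ g : {k : Fin n // k ≠ j} → ZMod v,
        F (fun k => if hk : k = j then a else g ⟨k, hk⟩) *
        F (fun k => if hk : k = j then b else g ⟨k, hk⟩) := by
  classical
  have key : ∀ (x : ZMod v) (g : {k : Fin n // k ≠ j} → ZMod v) (c : ZMod v),
      Function.update ((Equiv.funSplitAt j (ZMod v)).symm (x, g)) j c
        = fun k => if hk : k = j then c else g ⟨k, hk⟩ := by
    intro x g c
    funext k
    by_cases hk : k = j
    · subst hk; simp [Function.update]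
    · simp [Function.update, hk, Equiv.funSplitAt, Equiv.piSplitAt]
  rw [← Equiv.sum_comp (Equiv.funSplitAt j (ZMod v)).symm
    (fun i => F (Function.update i j a) * F (Function.update i j b))]
  rw [Fintype.sum_prod_type]
  simp only [key]
  rw [Finset.sum_const, Finset.card_univ, ZMod.card, nsmul_eq_mul]

lemma hadamard_aux (n : ℕ) (hn : 1 ≤ n) (h : (Fin n → ZMod v) → ℤ)
    (hh2 : ∀ j : Fin n, ∀ a b : ZMod v,
      ∑ g : {k : Fin n // k ≠ j} → ZMod v,
        h (fun k => if hk : k = j then a else g ⟨k, hk⟩) *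
        h (fun k => if hk : k = j then b else g ⟨k, hk⟩)
      = if a = b then (v : ℤ) ^ (n - 1) else 0)
    (j : Fin n) (a b : ZMod v) :
    ∑ i : Fin n → ZMod v, h (Function.update i j a) * h (Function.update i j b)
    = if a = b then (v : ℤ) ^ n else 0 := by
  rw [sum_update_eq, hh2 j a b]
  split
  · rw [← pow_succ', Nat.sub_add_cancel hn]
  · ring

/-- Lemma C: shift correlation. -/
lemma shift_sum (n : ℕ) (hn : 1 ≤ n) (h : (Fin n → ZMod v) → ℤ)
    (hh2 : ∀ j : Fin n, ∀ a b : ZMod v,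
      ∑ g : {k : Fin n // k ≠ j} → ZMod v,
        h (fun k => if hk : k = j then a else g ⟨k, hk⟩) *
        h (fun k => if hk : k = j then b else g ⟨k, hk⟩)
      = if a = b then (v : ℤ) ^ (n - 1) else 0)
    (p : Fin n) (c : ZMod v) :
    ∑ f : Fin n → ZMod v, h f * h (Function.update f p (f p + c))
    = if c = 0 then (v : ℤ) ^ n else 0 := by
  classical
  have key : ∀ (x : ZMod v) (g : {k : Fin n // k ≠ p} → ZMod v),
      (Equiv.funSplitAt p (ZMod v)).symm (x, g)
        = fun k => if hk : k = p then x else g ⟨k, hk⟩ := by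
    intro x g
    funext k
    by_cases hk : k = p
    · subst hk; simp [Equiv.funSplitAt, Equiv.piSplitAt]
    · simp [hk, Equiv.funSplitAt, Equiv.piSplitAt]
  have key2 : ∀ (g : {k : Fin n // k ≠ p} → ZMod v) (x d : ZMod v),
      Function.update (fun k => if hk : k = p then x else g ⟨k, hk⟩) p d
        = fun k => if hk : k = p then d else g ⟨k, hk⟩ := by
    intro g x d
    funext k
    by_cases hk : k = p
    · subst hk; simp [Function.update]
    · simp [Function.update, hk]
  rw [← Equiv.sum_comp (Equiv.funSplitAt p (ZMod v)).symm
    (fun f => h f * h (Function.update f p (f p + c)))]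
  rw [Fintype.sum_prod_type]
  have eval : ∀ (x : ZMod v) (g : {k : Fin n // k ≠ p} → ZMod v),
      ((Equiv.funSplitAt p (ZMod v)).symm (x, g)) p = x := by
    intro x g; rw [key]; simp
  calc (∑ x : ZMod v, ∑ g : {k : Fin n // k ≠ p} → ZMod v,
          h ((Equiv.funSplitAt p (ZMod v)).symm (x, g)) *
          h (Function.update ((Equiv.funSplitAt p (ZMod v)).symm (x, g)) p
              (((Equiv.funSplitAt p (ZMod v)).symm (x, g)) p + c)))
      = ∑ x : ZMod v, ∑ g : {k : Fin n // k ≠ p} → ZMod v,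
          h (fun k => if hk : k = p then x else g ⟨k, hk⟩) *
          h (fun k => if hk : k = p then x + c else g ⟨k, hk⟩) := by
        refine Finset.sum_congr rfl fun x _ => Finset.sum_congr rfl fun g _ => ?_
        rw [eval, key, key2]

    _ = ∑ x : ZMod v, (if x = x + c then (v : ℤ) ^ (n - 1) else 0) := by
        refine Finset.sum_congr rfl fun x _ => ?_
        exact hh2 p x (x + c)
    _ = if c = 0 then (v : ℤ) ^ n else 0 := by
        have : ∀ x : ZMod v, (x = x + c) = (c = 0) := by
          intro x; simp [left_eq_add]
        simp only [this]
        rw [Finset.sum_const, Finset.card_univ, ZMod.card, nsmul_eq_mul]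
        split
        · rw [← pow_succ', Nat.sub_add_cancel hn]
        · ring

/-- Shifted-diagonal correlation. -/
lemma diag_shift_sum (n : ℕ) (hn : 1 ≤ n) (h : (Fin n → ZMod v) → ℤ)
    (hh2 : ∀ j : Fin n, ∀ a b : ZMod v,
      ∑ g : {k : Fin n // k ≠ j} → ZMod v,
        h (fun k => if hk : k = j then a else g ⟨k, hk⟩) *
        h (fun k => if hk : k = j then b else g ⟨k, hk⟩)
      = if a = b then (v : ℤ) ^ (n - 1) else 0)
    (p : Fin n) (c d : ZMod v) :
    ∑ f : Fin n → ZMod v, h (Function.update f p (f p + c)) * h (Function.update f p (f p + d))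
    = if c = d then (v : ℤ) ^ n else 0 := by
  classical
  have hbij : Function.Bijective (fun f : Fin n → ZMod v => f + Pi.single p c) := by
    exact (Equiv.addRight (Pi.single p c : Fin n → ZMod v)).bijective
  have step : ∀ f : Fin n → ZMod v,
      h (Function.update f p (f p + c)) * h (Function.update f p (f p + d))
      = (fun f => h f * h (Function.update f p (f p + (d - c)))) ((fun f => f + Pi.single p c) f) := by
    intro f
    have h1 : f + Pi.single p c = Function.update f p (f p + c) := by
      funext k
      by_cases hk : k = p
      · subst hk; simp [Function.update]
      · simp [Function.update, hk, Pi.single_eq_of_ne hk]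
    have h2 : Function.update (f + Pi.single p c) p (((f + Pi.single p c : Fin n → ZMod v)) p + (d - c))
        = Function.update f p (f p + d) := by
      funext k
      by_cases hk : k = p
      · subst hk
        simp only [Function.update_self, Pi.add_apply, Pi.single_eq_same]
        ring
      · simp [Function.update, hk]
    simp only []
    rw [h2, h1]
  calc ∑ f : Fin n → ZMod v,
        h (Function.update f p (f p + c)) * h (Function.update f p (f p + d))
      = ∑ f : Fin n → ZMod v,
        (fun f => h f * h (Function.update f p (f p + (d - c)))) ((fun f => f + Pi.single p c) f) :=
        Finset.sum_congr rfl fun f _ => step f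
    _ = ∑ f : Fin n → ZMod v, h f * h (Function.update f p (f p + (d - c))) := by
        simpa using Function.Bijective.sum_comp hbij
          (fun f => h f * h (Function.update f p (f p + (d - c))))
    _ = if d - c = 0 then (v : ℤ) ^ n else 0 := shift_sum n hn h hh2 p (d - c)
    _ = if c = d then (v : ℤ) ^ n else 0 := by simp [sub_eq_zero, eq_comm]

end Aux

/-- Dimension-raising construction: if `h` is an `n`-dimensional Hadamard matrix of
order `v`, then `H(i₁,…,iₙ,i_{n+1}) = h(i₁,…,i_{n-1}, i_n + i_{n+1})` (the sum in the
last coordinate taken modulo `v`) is an `(n+1)`-dimensional Hadamard matrix of order `v`. -/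
theorem dimension_raising (v n : ℕ) [NeZero v] (hn : 1 ≤ n)
    (h : (Fin n → ZMod v) → ℤ)
    (hh : IsHadamardND v n h)
    (H : (Fin (n + 1) → ZMod v) → ℤ)
    (hH : ∀ i : Fin (n + 1) → ZMod v,
      H i = h (fun k : Fin n =>
        if (k : ℕ) + 1 = n then i k.castSucc + i (Fin.last n) else i k.castSucc)) :
    IsHadamardND v (n + 1) H := by
  classical
  obtain ⟨hh1, hh2⟩ := hh
  set p : Fin n := ⟨n - 1, by omega⟩ with hp
  have hcond : ∀ k : Fin n, ((k : ℕ) + 1 = n) ↔ k = p := by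
    intro k
    rw [Fin.ext_iff]
    have := k.isLt
    simp only [hp]
    omega
  -- H evaluated at a snoc
  have hsnoc : ∀ (g : Fin n → ZMod v) (c : ZMod v),
      H (Fin.snoc g c) = h (Function.update g p (g p + c)) := by
    intro g c
    rw [hH]
    congr 1
    funext k
    by_cases hk : k = p
    · subst hk
      rw [if_pos ((hcond p).mpr rfl), Function.update_self, Fin.snoc_castSucc, Fin.snoc_last]
    · rw [if_neg (fun hc => hk ((hcond k).mp hc)), Function.update_of_ne hk,
        Fin.snoc_castSucc]
  -- the reindexing bijection
  set ψ : (Fin n → ZMod v) × ZMod v → (Fin (n + 1) → ZMod v) :=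
    fun q => Fin.snoc (Function.update q.1 p (q.1 p - q.2)) q.2 with hψ
  have hbij : Function.Bijective ψ := by
    rw [Function.bijective_iff_has_inverse]
    refine ⟨fun i => (Function.update (fun k => i k.castSucc) p
      (i p.castSucc + i (Fin.last n)), i (Fin.last n)), ?_, ?_⟩
    · rintro ⟨f, x⟩
      simp only [hψ, Fin.snoc_last]
      refine Prod.ext ?_ rfl
      have hrestr : (fun k : Fin n => (Fin.snoc (Function.update f p (f p - x)) x :
          Fin (n + 1) → ZMod v) k.castSucc) = Function.update f p (f p - x) := by
        funext k; exact Fin.snoc_castSucc ..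
      simp only [hrestr, Fin.snoc_castSucc, Function.update_self, Function.update_idem]
      have : f p - x + x = f p := by ring
      rw [this, Function.update_eq_self]
    · intro i
      simp only [hψ]
      funext k
      refine Fin.lastCases ?_ (fun k' => ?_) k
      · rw [Fin.snoc_last]
      · rw [Fin.snoc_castSucc, Function.update_self, Function.update_idem]
        have : i p.castSucc + i (Fin.last n) - i (Fin.last n) = i p.castSucc := by ring
        rw [this, Function.update_eq_self]
  constructor
  · intro i
    rw [hH i]
    exact hh1 _
  · intro j a b
    -- key: full-function sum
    have hT : ∑ i : Fin (n + 1) → ZMod v,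
        H (Function.update i j a) * H (Function.update i j b)
        = if a = b then (v : ℤ) ^ (n + 1) else 0 := by
      rw [← Function.Bijective.sum_comp hbij
        (fun i => H (Function.update i j a) * H (Function.update i j b))]
      rw [Fintype.sum_prod_type_right]
      have inner : ∀ x : ZMod v,
          ∑ f : Fin n → ZMod v,
            H (Function.update (ψ (f, x)) j a) * H (Function.update (ψ (f, x)) j b)
          = if a = b then (v : ℤ) ^ n else 0 := by
        intro x
        rcases Fin.eq_castSucc_or_eq_last j with ⟨j', rfl⟩ | rfl
        · -- j = castSucc j'
          have eup : ∀ (f : Fin n → ZMod v) (c : ZMod v),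
              Function.update (ψ (f, x)) j'.castSucc c
              = Fin.snoc (Function.update (Function.update f p (f p - x)) j' c) x := by
            intro f c
            funext k
            refine Fin.lastCases ?_ (fun k' => ?_) k
            · rw [Function.update_of_ne (j'.castSucc_lt_last).ne', Fin.snoc_last]
              simp only [hψ, Fin.snoc_last]
            · by_cases hk' : k' = j'
              · subst hk'
                rw [Function.update_self, Fin.snoc_castSucc, Function.update_self]
              · rw [Function.update_of_ne (fun hc => hk' (Fin.castSucc_injective _ hc)),
                  Fin.snoc_castSucc]
                simp only [hψ, Fin.snoc_castSucc]
                rw [Function.update_of_ne hk']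
          by_cases hj' : j' = p
          · subst hj'
            have ev : ∀ (f : Fin n → ZMod v) (c : ZMod v),
                H (Function.update (ψ (f, x)) p.castSucc c)
                = h (Function.update f p (c + x)) := by
              intro f c
              rw [eup, hsnoc, Function.update_idem, Function.update_idem,
                Function.update_self]
            simp only [ev]
            rw [hadamard_aux n hn h hh2 p (a + x) (b + x)]
            congr 1
            simp
          · have ev : ∀ (f : Fin n → ZMod v) (c : ZMod v),
                H (Function.update (ψ (f, x)) j'.castSucc c)
                = h (Function.update f j' c) := by
              intro f c
              rw [eup, hsnoc]
              congr 1
              have hpe : (Function.update (Function.update f p (f p - x)) j' c) p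
                  = f p - x := by
                rw [Function.update_of_ne (Ne.symm hj'), Function.update_self]
              rw [hpe]
              funext k
              rcases eq_or_ne k p with rfl | hk
              · rw [Function.update_self, Function.update_of_ne (Ne.symm hj')]
                ring
              · rw [Function.update_of_ne hk]
                rcases eq_or_ne k j' with rfl | hk2
                · rw [Function.update_self, Function.update_self]
                · rw [Function.update_of_ne hk2, Function.update_of_ne hk2,
                    Function.update_of_ne hk]
            simp only [ev]
            exact hadamard_aux n hn h hh2 j' a b
        · -- j = last n
          have eup : ∀ (f : Fin n → ZMod v) (c : ZMod v),
              Function.update (ψ (f, x)) (Fin.last n) c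
              = Fin.snoc (Function.update f p (f p - x)) c := by
            intro f c
            funext k
            refine Fin.lastCases ?_ (fun k' => ?_) k
            · rw [Function.update_self, Fin.snoc_last]
            · rw [Function.update_of_ne (k'.castSucc_lt_last).ne, Fin.snoc_castSucc]
              simp only [hψ, Fin.snoc_castSucc]
          have ev : ∀ (f : Fin n → ZMod v) (c : ZMod v),
              H (Function.update (ψ (f, x)) (Fin.last n) c)
              = h (Function.update f p (f p + (c - x))) := by
            intro f c
            rw [eup, hsnoc, Function.update_idem, Function.update_self]
            have : f p - x + c = f p + (c - x) := by ring
            rw [this]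
          simp only [ev]
          rw [diag_shift_sum n hn h hh2 p (a - x) (b - x)]
          congr 1
          simp
      simp only [inner]
      rw [Finset.sum_const, Finset.card_univ, ZMod.card, nsmul_eq_mul]
      split
      · rw [← pow_succ']
      · ring
    have hv : (v : ℤ) ≠ 0 := Int.natCast_ne_zero.mpr (NeZero.ne v)
    apply mul_left_cancel₀ hv
    rw [← sum_update_eq, hT]
    simp only [Nat.add_sub_cancel]
    split
    · rw [← pow_succ']
    · ring
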